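/- Let μ > 0 and let M be a real number with 0 ≤ M < μ. Then ∫_M^μ G_μ(t) dt ≤ ((μ−M)/4)·((4−3Θ)/(2−Θ))·G_μ(M), where Θ = Θ(M, μ, μ). -/

import Mathlib

/-- The function `g(x) = (1/π)(√(1−x²) − x·arccos x)`. -/
noncomputable def g (x : ℝ) : ℝ := (1 / Real.pi) * (Real.sqrt (1 - x ^ 2) - x * Real.arccos x)

/-- For `μ > 0`, `G_μ(x) = μ·g(x/μ)`. -/
noncomputable def G (μ x : ℝ) : ℝ := μ * g (x / μ)

/-- `Θ(i,j,μ) = (j−i)/(2μ·arccos(i/μ)·√(1−(i/μ)²))`. -/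
noncomputable def Θ (i j μ : ℝ) : ℝ :=
  (j - i) / (2 * μ * Real.arccos (i / μ) * Real.sqrt (1 - (i / μ) ^ 2))

set_option maxHeartbeats 2000000

lemma G_continuous (μ : ℝ) : Continuous (G μ) := by unfold G g; continuity

lemma G_self {μ : ℝ} (hμ : 0 < μ) : G μ μ = 0 := by
  rw [G, div_self (ne_of_gt hμ)]
  simp [g, Real.arccos_one]

lemma g_hasDerivAt {y : ℝ} (h1 : -1 < y) (h2 : y < 1) :
    HasDerivAt g (-Real.arccos y / Real.pi) y := by
  have hy2 : 0 < 1 - y ^ 2 := by nlinarith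
  have hsp : 0 < Real.sqrt (1 - y ^ 2) := Real.sqrt_pos.2 hy2
  have d1 : HasDerivAt (fun x : ℝ => 1 - x ^ 2) (-(2 * y)) y := by
    simpa using (hasDerivAt_pow 2 y).const_sub 1
  have d2 : HasDerivAt (fun x : ℝ => Real.sqrt (1 - x ^ 2))
      (1 / (2 * Real.sqrt (1 - y ^ 2)) * -(2 * y)) y :=
    (Real.hasDerivAt_sqrt (ne_of_gt hy2)).comp y d1
  have d3 : HasDerivAt (fun x : ℝ => x * Real.arccos x)
      (Real.arccos y + y * -(1 / Real.sqrt (1 - y ^ 2))) y := by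
    have := (hasDerivAt_id' y).mul (Real.hasDerivAt_arccos (ne_of_gt h1) (ne_of_lt h2))
    refine this.congr_deriv ?_
    ring
  have := ((d2.sub d3).const_mul (1 / Real.pi))
  unfold g
  refine this.congr_deriv ?_
  have hπ : Real.pi ≠ 0 := Real.pi_ne_zero
  field_simp
  ring

lemma G_hasDerivAt {μ t : ℝ} (hμ : 0 < μ) (h1 : -μ < t) (h2 : t < μ) :
    HasDerivAt (G μ) (-Real.arccos (t / μ) / Real.pi) t := by
  have h1' : -1 < t / μ := by rw [lt_div_iff₀ hμ]; linarith
  have h2' : t / μ < 1 := (div_lt_one hμ).2 h2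
  have hdiv : HasDerivAt (fun x : ℝ => x / μ) (1 / μ) t := by
    simpa using (hasDerivAt_id t).div_const μ
  have hg := ((g_hasDerivAt h1' h2').comp t hdiv).const_mul μ
  have hfun : G μ = fun x : ℝ => μ * ((g ∘ fun x : ℝ => x / μ) x) := rfl
  rw [hfun]
  refine hg.congr_deriv ?_
  field_simp

lemma arccos_comp_hasDerivAt {μ t : ℝ} (hμ : 0 < μ) (h1 : -μ < t) (h2 : t < μ) :
    HasDerivAt (fun x : ℝ => Real.arccos (x / μ))
      (-(1 / Real.sqrt (1 - (t / μ) ^ 2)) * (1 / μ)) t := by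
  have h1' : -1 < t / μ := by rw [lt_div_iff₀ hμ]; linarith
  have h2' : t / μ < 1 := (div_lt_one hμ).2 h2
  have hdiv : HasDerivAt (fun x : ℝ => x / μ) (1 / μ) t := by
    simpa using (hasDerivAt_id t).div_const μ
  exact (Real.hasDerivAt_arccos (ne_of_gt h1') (ne_of_lt h2')).comp (h₂ := Real.arccos) (h := fun x : ℝ => x / μ) t hdiv

lemma G_convex_aux {μ M : ℝ} (hμ : 0 < μ) (hM0 : 0 ≤ M) (hM : M < μ) :
    ConvexOn ℝ (Set.Icc M μ)
      (fun t => G μ t - 1 / (μ * Real.pi * Real.sqrt (1 - (M / μ) ^ 2)) * t ^ 2 / 2) := by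
  set K := 1 / (μ * Real.pi * Real.sqrt (1 - (M / μ) ^ 2)) with hK
  have hsM : 0 < Real.sqrt (1 - (M / μ) ^ 2) := by
    apply Real.sqrt_pos.2
    have h2' : M / μ < 1 := (div_lt_one hμ).2 hM
    have h0' : 0 ≤ M / μ := div_nonneg hM0 hμ.le
    nlinarith
  apply convexOn_of_hasDerivWithinAt2_nonneg (convex_Icc M μ)
    (f' := fun t => -Real.arccos (t / μ) / Real.pi - K * t)
    (f'' := fun t => 1 / (μ * Real.pi * Real.sqrt (1 - (t / μ) ^ 2)) - K)
  · apply ContinuousOn.sub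
    · exact ((by unfold G g; continuity : Continuous (G μ))).continuousOn
    · exact ((continuous_const.mul (continuous_pow 2)).div_const 2).continuousOn
  · rw [interior_Icc]
    intro t ht
    obtain ⟨ht1, ht2⟩ := ht
    have hD : HasDerivAt (fun t => G μ t - K * t ^ 2 / 2)
        (-Real.arccos (t / μ) / Real.pi - K * t) t := by
      have hsq : HasDerivAt (fun x : ℝ => K * x ^ 2 / 2) (K * t) t := by
        have := ((hasDerivAt_pow 2 t).const_mul K).div_const 2
        refine this.congr_deriv ?_
        ring
      exact (G_hasDerivAt hμ (by linarith) ht2).sub hsq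
    exact hD.hasDerivWithinAt
  · rw [interior_Icc]
    intro t ht
    obtain ⟨ht1, ht2⟩ := ht
    have hD : HasDerivAt (fun x : ℝ => -Real.arccos (x / μ) / Real.pi - K * x)
        (1 / (μ * Real.pi * Real.sqrt (1 - (t / μ) ^ 2)) - K) t := by
      have h1 := arccos_comp_hasDerivAt hμ (by linarith) ht2
      have h2 := ((h1.neg).div_const Real.pi).sub ((hasDerivAt_id t).const_mul K)
      refine h2.congr_deriv ?_
      have hst : 0 < Real.sqrt (1 - (t / μ) ^ 2) := by
        apply Real.sqrt_pos.2
        have h2' : t / μ < 1 := (div_lt_one hμ).2 ht2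
        have h0' : 0 ≤ t / μ := div_nonneg (by linarith) hμ.le
        nlinarith
      have hπ : Real.pi ≠ 0 := Real.pi_ne_zero
      field_simp
    exact hD.hasDerivWithinAt
  · rw [interior_Icc]
    intro t ht
    obtain ⟨ht1, ht2⟩ := ht
    have hst : 0 < Real.sqrt (1 - (t / μ) ^ 2) := by
      apply Real.sqrt_pos.2
      have h2' : t / μ < 1 := (div_lt_one hμ).2 ht2
      have h0' : 0 ≤ t / μ := div_nonneg (by linarith) hμ.le
      nlinarith
    have hle : Real.sqrt (1 - (t / μ) ^ 2) ≤ Real.sqrt (1 - (M / μ) ^ 2) := by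
      apply Real.sqrt_le_sqrt
      have htm : M / μ ≤ t / μ := by gcongr
      have h0' : 0 ≤ M / μ := div_nonneg hM0 hμ.le
      nlinarith
    have : (0:ℝ) < μ * Real.pi * Real.sqrt (1 - (t / μ) ^ 2) :=
      mul_pos (mul_pos hμ Real.pi_pos) hst
    rw [hK, sub_nonneg]
    apply one_div_le_one_div_of_le this
    nlinarith [mul_le_mul_of_nonneg_left hle (le_of_lt (mul_pos hμ Real.pi_pos))]

lemma poly_integral (M μ A K : ℝ) (h : M < μ) :
    ∫ t in M..μ, (A * (μ - t) / (μ - M) - K / 2 * (t - M) * (μ - t)) =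
      A * (μ - M) / 2 - K * (μ - M) ^ 3 / 12 := by
  have hδ : μ - M ≠ 0 := by intro h'; linarith [sub_eq_zero.1 h']
  have hP : ∀ t ∈ Set.uIcc M μ,
      HasDerivAt (fun t : ℝ => -A * (μ - t) ^ 2 / (2 * (μ - M))
          - K / 2 * (-(t ^ 3) / 3 + (M + μ) * t ^ 2 / 2 - M * μ * t))
        (A * (μ - t) / (μ - M) - K / 2 * (t - M) * (μ - t)) t := by
    intro t _
    have h1 : HasDerivAt (fun t : ℝ => μ - t) (-1) t := by
      simpa using (hasDerivAt_id t).const_sub μ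
    have h2 : HasDerivAt (fun t : ℝ => -A * (μ - t) ^ 2 / (2 * (μ - M)))
        (-A * (2 * (μ - t) * (-1)) / (2 * (μ - M))) t := by
      have := ((h1.pow 2).const_mul (-A)).div_const (2 * (μ - M))
      refine this.congr_deriv ?_
      norm_num
    have h3 : HasDerivAt (fun t : ℝ => -(t ^ 3) / 3 + (M + μ) * t ^ 2 / 2 - M * μ * t)
        (-(3 * t ^ 2) / 3 + (M + μ) * (2 * t) / 2 - M * μ) t := by
      have ha := ((hasDerivAt_pow 3 t).neg).div_const 3
      have hb := ((hasDerivAt_pow 2 t).const_mul (M + μ)).div_const 2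
      have hc := (hasDerivAt_id t).const_mul (M * μ)
      have := (ha.add hb).sub hc
      refine this.congr_deriv ?_
      ring
    have := h2.sub ((h3.const_mul (K / 2)))
    refine this.congr_deriv ?_
    field_simp
    ring
  rw [intervalIntegral.integral_eq_sub_of_hasDerivAt hP (by apply Continuous.intervalIntegrable; continuity)]
  field_simp
  ring

/-- Lemma 2.5: for `0 ≤ M < μ`,
`∫_M^μ G_μ(t) dt ≤ ((μ−M)/4)·((4−3Θ)/(2−Θ))·G_μ(M)` with `Θ = Θ(M,μ,μ)`. -/
theorem stmt3 (μ M : ℝ) (hμ : 0 < μ) (hM0 : 0 ≤ M) (hM : M < μ) :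
    (∫ t in M..μ, G μ t) ≤
      (μ - M) / 4 * ((4 - 3 * Θ M μ μ) / (2 - Θ M μ μ)) * G μ M := by
  have hπ : 0 < Real.pi := Real.pi_pos
  set m := M / μ with hm_def
  have hm0 : 0 ≤ m := div_nonneg hM0 hμ.le
  have hm1 : m < 1 := (div_lt_one hμ).2 hM
  have hMm : M = μ * m := by rw [hm_def]; field_simp
  set c := Real.arccos m with hc_def
  set s := Real.sqrt (1 - m ^ 2) with hs_def
  have hc_pos : 0 < c := Real.arccos_pos.2 hm1
  have hc_le : c ≤ Real.pi / 2 := Real.arccos_le_pi_div_two.2 hm0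
  have h1m2 : 0 < 1 - m ^ 2 := by nlinarith
  have hs_pos : 0 < s := Real.sqrt_pos.2 h1m2
  have hs_eq : Real.sin c = s := by rw [hc_def, hs_def]; exact Real.sin_arccos m
  have hs_sq : s ^ 2 = 1 - m ^ 2 := Real.sq_sqrt h1m2.le
  have hsc : s ≤ c := by rw [← hs_eq]; exact Real.sin_le hc_pos.le
  have hmc : m * c ≤ s := by
    rcases eq_or_lt_of_le hm0 with h | h
    · rw [← h]; simpa using hs_pos.le
    · have hc2 : c < Real.pi / 2 := Real.arccos_lt_pi_div_two.2 h
      have htan := Real.lt_tan hc_pos hc2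
      rw [Real.tan_eq_sin_div_cos, hs_eq, hc_def, Real.cos_arccos (by linarith) hm1.le] at htan
      calc m * c ≤ m * (s / m) := mul_le_mul_of_nonneg_left htan.le h.le
        _ = s := by field_simp
  set δ := μ - M with hδ_def
  have hδ : 0 < δ := by rw [hδ_def]; linarith
  set θ := Θ M μ μ with hθ_def
  have hθ_eq : θ = δ / (2 * μ * c * s) := by
    rw [hθ_def]
    simp only [Θ]
    try rw [← hm_def]
  set A := G μ M with hA_def
  have hA_eq : A = μ * (s - m * c) / Real.pi := by
    rw [hA_def]
    simp only [G, g]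
    rw [← hm_def, ← hc_def, ← hs_def]
    ring
  set K := 1 / (μ * Real.pi * s) with hK_def
  have hconv := G_convex_aux hμ hM0 hM
  rw [← hm_def, ← hs_def, ← hK_def] at hconv
  have hGμμ : G μ μ = 0 := G_self hμ
  clear_value m c s δ θ A K
  have hθ_pos : 0 < θ := by
    rw [hθ_eq]
    exact div_pos hδ (by nlinarith [mul_pos (mul_pos hμ hc_pos) hs_pos])
  have hcs : 1 - m ≤ c * s := by
    nlinarith [hs_sq, mul_le_mul_of_nonneg_right hsc hs_pos.le]
  have hθ_half : θ ≤ 1 / 2 := by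
    rw [hθ_eq, div_le_div_iff₀ (by nlinarith [mul_pos (mul_pos hμ hc_pos) hs_pos]) (by norm_num)]
    nlinarith [mul_le_mul_of_nonneg_left hcs hμ.le]
  have hA0 : 0 ≤ A := by
    rw [hA_eq]
    apply div_nonneg _ hπ.le
    nlinarith [mul_le_mul_of_nonneg_left hmc hμ.le]
  have hAD : A ≤ δ * c / Real.pi := by
    rw [hA_eq]
    rw [div_le_div_iff₀ hπ hπ]
    have hnum : μ * (s - m * c) ≤ δ * c := by
      have e1 : δ * c = (μ - M) * c := by rw [hδ_def]
      have e2 : M * c = μ * (m * c) := by rw [hMm]; ring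
      linarith [mul_le_mul_of_nonneg_left hsc hμ.le]
    linarith [mul_le_mul_of_nonneg_right hnum hπ.le]
  have hKδ : K * δ = 2 * θ * (c / Real.pi) := by
    rw [hK_def, hθ_eq]
    field_simp
  have hpt : ∀ t ∈ Set.Icc M μ, G μ t ≤ A * (μ - t) / (μ - M) - K / 2 * (t - M) * (μ - t) := by
    intro t ht
    obtain ⟨ht1, ht2⟩ := ht
    have hδne : (μ : ℝ) - M ≠ 0 := ne_of_gt (by linarith)
    set lam := (μ - t) / (μ - M) with hlam_def
    have hlam0 : 0 ≤ lam := div_nonneg (by linarith) (by linarith)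
    have hlam1 : 0 ≤ 1 - lam := by
      have : lam ≤ 1 := by
        rw [hlam_def]
        exact div_le_one_of_le₀ (by linarith) (by linarith)
      linarith
    have hMmem : M ∈ Set.Icc M μ := Set.left_mem_Icc.2 hM.le
    have hμmem : μ ∈ Set.Icc M μ := Set.right_mem_Icc.2 hM.le
    have hcomb : lam * M + (1 - lam) * μ = t := by
      rw [hlam_def]; field_simp; ring
    have hchord := hconv.2 hMmem hμmem hlam0 hlam1 (by ring)
    simp only [smul_eq_mul] at hchord
    rw [hcomb, ← hA_def, hGμμ] at hchord
    have heq : A * (μ - t) / (μ - M) - K / 2 * (t - M) * (μ - t)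
        = lam * (A - K * M ^ 2 / 2) + (1 - lam) * (0 - K * μ ^ 2 / 2) + K * t ^ 2 / 2 := by
      rw [hlam_def]
      field_simp
      ring
    linarith [hchord, heq]
  have hint1 : IntervalIntegrable (G μ) MeasureTheory.volume M μ :=
    (G_continuous μ).intervalIntegrable M μ
  have hint2 : IntervalIntegrable (fun t => A * (μ - t) / (μ - M) - K / 2 * (t - M) * (μ - t))
      MeasureTheory.volume M μ := by
    have c1 : Continuous fun t : ℝ => A * (μ - t) / (μ - M) :=
      (continuous_const.mul (continuous_const.sub continuous_id)).div_const _
    have c2 : Continuous fun t : ℝ => K / 2 * (t - M) * (μ - t) :=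
      ((continuous_const.mul (continuous_id.sub continuous_const)).mul
        (continuous_const.sub continuous_id))
    exact (c1.sub c2).intervalIntegrable M μ
  have hmono := intervalIntegral.integral_mono_on hM.le hint1 hint2 hpt
  rw [poly_integral M μ A K hM, ← hδ_def] at hmono
  have h2θ : 0 < 2 - θ := by linarith
  have hstep1 : θ * δ * A / 6 ≤ K * δ ^ 3 / 12 := by
    have h1 : θ * δ * A ≤ θ * δ * (δ * c / Real.pi) :=
      mul_le_mul_of_nonneg_left hAD (mul_nonneg hθ_pos.le hδ.le)
    have h2 : θ * δ * (δ * c / Real.pi) / 6 = K * δ ^ 3 / 12 := by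
      linear_combination (-(δ ^ 2) / 12) * hKδ
    linarith
  have hu2 : (3 - θ) * 2 / 3 ≤ (4 - 3 * θ) / (2 - θ) := by
    rw [le_div_iff₀ h2θ]
    nlinarith [mul_nonneg hθ_pos.le (by linarith : (0:ℝ) ≤ 1 - 2 * θ)]
  have h3 := mul_le_mul_of_nonneg_left hu2
    (show (0:ℝ) ≤ δ * A / 4 from div_nonneg (mul_nonneg hδ.le hA0) (by norm_num))
  nlinarith [hmono, hstep1, h3]
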